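/- Define the singular value function φ^s(L^r) = (α₁^{(r)})^s for 0 < s ≤ 1 and φ^s(L^r) = α₁^{(r)}·(α₂^{(r)})^{s-1} for 1 < s ≤ 2, where α₁^{(r)} ≥ α₂^{(r)} are the singular values of L^r with L = [[1/2,0],[−1/2,1/2]]. Then the series Σ_{r≥1} 2^r·φ^s(L^r) converges if and only if s > 1. Consequently inf{s > 0 : Σ_{r≥1} 2^r φ^s(L^r) < ∞} = 1. -/
import Mathlib


open Real

/-- Larger singular value of `L^r`. -/
noncomputable def alpha1 (r : ℕ) : ℝ :=
  (1 / 2 : ℝ) ^ r * Real.sqrt (((r : ℝ) ^ 2 + 2 + Real.sqrt ((r : ℝ) ^ 4 + 4 * (r : ℝ) ^ 2)) / 2)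

/-- Smaller singular value of `L^r`. -/
noncomputable def alpha2 (r : ℕ) : ℝ :=
  (1 / 2 : ℝ) ^ r * Real.sqrt (((r : ℝ) ^ 2 + 2 - Real.sqrt ((r : ℝ) ^ 4 + 4 * (r : ℝ) ^ 2)) / 2)

/-- Singular value function `φ^s(L^r)`. -/
noncomputable def phiSV (s : ℝ) (r : ℕ) : ℝ :=
  if s ≤ 1 then alpha1 r ^ s else alpha1 r * alpha2 r ^ (s - 1)

lemma sqrt_inner_le (n : ℕ) :
    Real.sqrt ((n : ℝ) ^ 4 + 4 * (n : ℝ) ^ 2) ≤ (n : ℝ) ^ 2 + 2 := by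
  have h : ((n : ℝ) ^ 4 + 4 * (n : ℝ) ^ 2) ≤ ((n : ℝ) ^ 2 + 2) ^ 2 := by nlinarith
  calc Real.sqrt ((n : ℝ) ^ 4 + 4 * (n : ℝ) ^ 2)
      ≤ Real.sqrt (((n : ℝ) ^ 2 + 2) ^ 2) := Real.sqrt_le_sqrt h
    _ = (n : ℝ) ^ 2 + 2 := Real.sqrt_sq (by positivity)

lemma sqrt_inner_ge (n : ℕ) :
    (n : ℝ) ^ 2 ≤ Real.sqrt ((n : ℝ) ^ 4 + 4 * (n : ℝ) ^ 2) := by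
  have h : ((n : ℝ) ^ 2) ^ 2 ≤ (n : ℝ) ^ 4 + 4 * (n : ℝ) ^ 2 := by nlinarith
  calc (n : ℝ) ^ 2 = Real.sqrt (((n : ℝ) ^ 2) ^ 2) := (Real.sqrt_sq (by positivity)).symm
    _ ≤ _ := Real.sqrt_le_sqrt h

lemma alpha1_ge (n : ℕ) : (1 / 2 : ℝ) ^ n ≤ alpha1 n := by
  have h1 : (1 : ℝ) ≤ Real.sqrt (((n : ℝ) ^ 2 + 2 + Real.sqrt ((n : ℝ) ^ 4 + 4 * (n : ℝ) ^ 2)) / 2) := by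
    rw [show (1:ℝ) = Real.sqrt 1 by simp]
    apply Real.sqrt_le_sqrt
    have := Real.sqrt_nonneg ((n : ℝ) ^ 4 + 4 * (n : ℝ) ^ 2)
    nlinarith [sq_nonneg (n:ℝ)]
  have h2 : (0:ℝ) < (1/2:ℝ)^n := by positivity
  calc (1/2:ℝ)^n = (1/2:ℝ)^n * 1 := by ring
    _ ≤ alpha1 n := by unfold alpha1; exact mul_le_mul_of_nonneg_left h1 h2.le

lemma alpha1_nonneg (n : ℕ) : 0 ≤ alpha1 n :=
  le_trans (by positivity) (alpha1_ge n)

lemma alpha1_le (n : ℕ) : alpha1 n ≤ (1 / 2 : ℝ) ^ n * ((n : ℝ) + 2) := by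
  unfold alpha1
  have h1 : Real.sqrt (((n : ℝ) ^ 2 + 2 + Real.sqrt ((n : ℝ) ^ 4 + 4 * (n : ℝ) ^ 2)) / 2)
      ≤ (n : ℝ) + 2 := by
    have := sqrt_inner_le n
    calc Real.sqrt (((n : ℝ) ^ 2 + 2 + Real.sqrt ((n : ℝ) ^ 4 + 4 * (n : ℝ) ^ 2)) / 2)
        ≤ Real.sqrt (((n:ℝ)+2)^2) := Real.sqrt_le_sqrt (by nlinarith [Nat.cast_nonneg (α := ℝ) n])
      _ = (n:ℝ) + 2 := Real.sqrt_sq (by positivity)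
  exact mul_le_mul_of_nonneg_left h1 (by positivity)

lemma alpha2_nonneg (n : ℕ) : 0 ≤ alpha2 n := by
  unfold alpha2; positivity

lemma alpha2_le (n : ℕ) : alpha2 n ≤ (1 / 2 : ℝ) ^ n := by
  unfold alpha2
  have h1 : Real.sqrt (((n : ℝ) ^ 2 + 2 - Real.sqrt ((n : ℝ) ^ 4 + 4 * (n : ℝ) ^ 2)) / 2) ≤ 1 := by
    have := sqrt_inner_ge n
    rw [show (1:ℝ) = Real.sqrt 1 by simp]
    apply Real.sqrt_le_sqrt
    linarith
  calc (1/2:ℝ)^n * Real.sqrt (((n : ℝ) ^ 2 + 2 - Real.sqrt ((n : ℝ) ^ 4 + 4 * (n : ℝ) ^ 2)) / 2)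
      ≤ (1/2:ℝ)^n * 1 := mul_le_mul_of_nonneg_left h1 (by positivity)
    _ = (1/2:ℝ)^n := by ring

lemma not_summable_small (s : ℝ) (hs0 : 0 < s) (hs1 : s ≤ 1) :
    ¬ Summable (fun r : ℕ => (2 : ℝ) ^ (r + 1) * phiSV s (r + 1)) := by
  intro h
  have hterm : ∀ r : ℕ, (1 : ℝ) ≤ (2 : ℝ) ^ (r + 1) * phiSV s (r + 1) := by
    intro r
    set n := r + 1 with hn
    have hb : phiSV s n = alpha1 n ^ s := by unfold phiSV; rw [if_pos hs1]
    have h1 : ((1/2:ℝ)^n) ^ s ≤ alpha1 n ^ s :=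
      Real.rpow_le_rpow (by positivity) (alpha1_ge n) hs0.le
    have h2 : (1/2:ℝ)^n ≤ ((1/2:ℝ)^n) ^ s := by
      have := Real.rpow_le_rpow_of_exponent_ge (x := (1/2:ℝ)^n) (by positivity)
        (by apply pow_le_one₀ <;> norm_num) hs1
      simpa using this
    have h3 : (1/2:ℝ)^n ≤ phiSV s n := by rw [hb]; linarith
    have h4 : (2:ℝ)^n * (1/2:ℝ)^n = 1 := by
      rw [← mul_pow]; norm_num
    calc (1:ℝ) = (2:ℝ)^n * (1/2:ℝ)^n := h4.symm
      _ ≤ (2:ℝ)^n * phiSV s n := mul_le_mul_of_nonneg_left h3 (by positivity)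
  have h0 := h.tendsto_atTop_zero
  have : (1:ℝ) ≤ 0 := ge_of_tendsto h0 (Filter.Eventually.of_forall hterm)
  linarith

lemma summable_big (s : ℝ) (hs : 1 < s) :
    Summable (fun r : ℕ => (2 : ℝ) ^ (r + 1) * phiSV s (r + 1)) := by
  set c : ℝ := (1/2 : ℝ) ^ (s - 1) with hc
  have hc0 : 0 < c := Real.rpow_pos_of_pos (by norm_num) _
  have hc1 : c < 1 := Real.rpow_lt_one (by norm_num) (by norm_num) (by linarith)
  -- comparison series
  have hg : Summable (fun r : ℕ => ((r : ℝ) + 3) * c ^ (r + 1)) := by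
    have h1 : Summable (fun r : ℕ => (r : ℝ) * c ^ r) := by
      have := summable_pow_mul_geometric_of_norm_lt_one (R := ℝ) 1
        (r := c) (by rw [Real.norm_eq_abs, abs_of_pos hc0]; exact hc1)
      simpa using this
    have h2 : Summable (fun r : ℕ => c ^ r) := summable_geometric_of_lt_one hc0.le hc1
    have := (h1.mul_left c).add (h2.mul_left (3 * c))
    refine this.congr fun r => ?_
    ring
  refine Summable.of_nonneg_of_le (fun r => ?_) (fun r => ?_) hg
  · have h1 := alpha1_nonneg (r+1)
    have h2 : (0:ℝ) ≤ alpha2 (r+1) ^ (s-1) := Real.rpow_nonneg (alpha2_nonneg _) _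
    have hb : phiSV s (r+1) = alpha1 (r+1) * alpha2 (r+1) ^ (s - 1) := by
      unfold phiSV; rw [if_neg (by linarith)]
    rw [hb]; positivity
  · set n := r + 1 with hn
    have hb : phiSV s n = alpha1 n * alpha2 n ^ (s - 1) := by
      unfold phiSV; rw [if_neg (by linarith)]
    have hkey : ((1/2:ℝ)^n) ^ (s-1) = c ^ n := by
      rw [← Real.rpow_natCast (1/2:ℝ) n, ← Real.rpow_mul (by norm_num), mul_comm,
        Real.rpow_mul (by norm_num), Real.rpow_natCast]
    have h2 : alpha2 n ^ (s-1) ≤ c ^ n := by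
      rw [← hkey]
      exact Real.rpow_le_rpow (alpha2_nonneg n) (alpha2_le n) (by linarith)
    have h1 := alpha1_le n
    have hmul : alpha1 n * alpha2 n ^ (s-1) ≤ ((1/2:ℝ)^n * ((n:ℝ)+2)) * c ^ n :=
      mul_le_mul h1 h2 (Real.rpow_nonneg (alpha2_nonneg n) _) (by positivity)
    have h4 : (2:ℝ)^n * (1/2:ℝ)^n = 1 := by rw [← mul_pow]; norm_num
    have hfin : (2:ℝ)^n * (((1/2:ℝ)^n * ((n:ℝ)+2)) * c ^ n) = ((n:ℝ)+2) * c ^ n := by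
      calc (2:ℝ)^n * (((1/2:ℝ)^n * ((n:ℝ)+2)) * c ^ n)
          = ((2:ℝ)^n * (1/2:ℝ)^n) * (((n:ℝ)+2) * c ^ n) := by ring
        _ = ((n:ℝ)+2) * c ^ n := by rw [h4]; ring
    have : (2:ℝ)^n * phiSV s n ≤ ((n:ℝ)+2) * c ^ n := by
      rw [hb, ← hfin]
      exact mul_le_mul_of_nonneg_left hmul (by positivity)
    have hcast : ((n:ℝ)+2) = (r:ℝ) + 3 := by
      rw [hn]; push_cast; ring
    rw [hcast] at this
    exact this

/-- `Σ_{r≥1} 2^r φ^s(L^r)` converges iff `s > 1`, hence the affinity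
dimension `inf{s > 0 : Σ_{r≥1} 2^r φ^s(L^r) < ∞}` equals `1`. -/
theorem affinity_dimension_eq_one :
    (∀ s : ℝ, 0 < s → s ≤ 2 →
      (Summable (fun r : ℕ => (2 : ℝ) ^ (r + 1) * phiSV s (r + 1)) ↔ 1 < s)) ∧
    sInf {s : ℝ | 0 < s ∧ Summable (fun r : ℕ => (2 : ℝ) ^ (r + 1) * phiSV s (r + 1))} = 1 := by
  constructor
  · intro s hs0 _
    constructor
    · intro h
      by_contra hle
      exact not_summable_small s hs0 (not_lt.mp hle) h
    · exact summable_big s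
  · have hset : {s : ℝ | 0 < s ∧ Summable (fun r : ℕ => (2 : ℝ) ^ (r + 1) * phiSV s (r + 1))}
        = Set.Ioi 1 := by
      ext s
      simp only [Set.mem_setOf_eq, Set.mem_Ioi]
      constructor
      · rintro ⟨hs0, hsum⟩
        by_contra hle
        exact not_summable_small s hs0 (not_lt.mp hle) hsum
      · intro hs
        exact ⟨by linarith, summable_big s hs⟩
    rw [hset]
    exact csInf_Ioi
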